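/- Let B_t be the matrix-valued function B = ∫_A (x ⊗ x − Id) dγⁿ(x) for a measurable set A ⊆ ℝⁿ. Then B² ≤ 4·Id in the positive semi-definite order; in particular |⟨B u, u⟩| ≤ 2 for every unit vector u. -/

import Mathlib

open MeasureTheory ProbabilityTheory Real Set Filter
open scoped ENNReal NNReal

noncomputable def gamma1 : Measure ℝ := gaussianReal 0 1

noncomputable def Phi (t : ℝ) : ℝ :=
  ∫ s in Set.Iic t, (Real.sqrt (2 * Real.pi))⁻¹ * Real.exp (-s ^ 2 / 2)

noncomputable def Psi : ℝ → ℝ := Function.invFun Phi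
noncomputable def stdGaussian (n : ℕ) : Measure (EuclideanSpace ℝ (Fin n)) :=
  Measure.map (MeasurableEquiv.toLp 2 (Fin n → ℝ))
    (Measure.pi fun _ : Fin n => gaussianReal 0 1)


namespace CovAux

noncomputable def pdf1 (t : ℝ) : ℝ := gaussianPDFReal 0 1 t

lemma pdf1_eq (t : ℝ) : pdf1 t = (Real.sqrt (2 * Real.pi))⁻¹ * Real.exp (-(1/2) * t ^ 2) := by
  simp only [pdf1, gaussianPDFReal, NNReal.coe_one, mul_one, sub_zero]
  ring_nf

lemma pdf1_nonneg (t : ℝ) : 0 ≤ pdf1 t := gaussianPDFReal_nonneg 0 1 t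

lemma measurable_pdf1 : Measurable pdf1 := measurable_gaussianPDFReal 0 1

lemma gauss_eq_withDensity :
    gaussianReal 0 1 = volume.withDensity (fun t => ((pdf1 t).toNNReal : ℝ≥0∞)) := by
  rw [gaussianReal_of_var_ne_zero 0 one_ne_zero]
  rfl

lemma gauss_integral (g : ℝ → ℝ) :
    ∫ t, g t ∂(gaussianReal 0 1) = ∫ t, pdf1 t * g t := by
  rw [gauss_eq_withDensity, integral_withDensity_eq_integral_smul
    (measurable_pdf1.real_toNNReal) g]
  congr 1 with t
  simp [NNReal.smul_def, Real.coe_toNNReal _ (pdf1_nonneg t)]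

lemma gauss_integrable (g : ℝ → ℝ) (h : Integrable (fun t => pdf1 t * g t)) :
    Integrable g (gaussianReal 0 1) := by
  rw [gauss_eq_withDensity,
    integrable_withDensity_iff_integrable_smul (measurable_pdf1.real_toNNReal)]
  refine h.congr (Eventually.of_forall fun t => ?_)
  simp [NNReal.smul_def, Real.coe_toNNReal _ (pdf1_nonneg t)]

lemma int_exp : Integrable (fun t : ℝ => Real.exp (-(1/2 : ℝ) * t ^ 2)) :=
  integrable_exp_neg_mul_sq (by norm_num)

lemma int_mul_exp : Integrable (fun t : ℝ => t * Real.exp (-(1/2 : ℝ) * t ^ 2)) :=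
  integrable_mul_exp_neg_mul_sq (by norm_num)

lemma int_sq_exp : Integrable (fun t : ℝ => t ^ 2 * Real.exp (-(1/2 : ℝ) * t ^ 2)) := by
  have := integrable_rpow_mul_exp_neg_mul_sq (b := 1/2) (by norm_num) (s := 2) (by norm_num)
  simpa [Real.rpow_two] using this

lemma integral_exp_eq : ∫ t : ℝ, Real.exp (-(1/2 : ℝ) * t ^ 2) = Real.sqrt (2 * Real.pi) := by
  rw [integral_gaussian, show (Real.pi / (1/2 : ℝ)) = 2 * Real.pi by ring]

lemma integral_mul_exp_eq : ∫ t : ℝ, t * Real.exp (-(1/2 : ℝ) * t ^ 2) = 0 := by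
  apply integral_eq_zero_of_hasDerivAt_of_integrable
    (f := fun t : ℝ => -Real.exp (-(1/2 : ℝ) * t ^ 2))
  · intro t
    have h := (((hasDerivAt_pow 2 t).const_mul (-(1/2 : ℝ))).exp).neg
    convert h using 1
    · rfl
    push_cast
    ring
  · exact int_mul_exp
  · exact int_exp.neg

lemma integral_sq_exp_eq :
    ∫ t : ℝ, t ^ 2 * Real.exp (-(1/2 : ℝ) * t ^ 2) = Real.sqrt (2 * Real.pi) := by
  have h0 : ∫ t : ℝ,
      (Real.exp (-(1/2 : ℝ) * t ^ 2) - t ^ 2 * Real.exp (-(1/2 : ℝ) * t ^ 2)) = 0 := by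
    apply integral_eq_zero_of_hasDerivAt_of_integrable
      (f := fun t : ℝ => t * Real.exp (-(1/2 : ℝ) * t ^ 2))
    · intro t
      have h := (hasDerivAt_id t).mul (((hasDerivAt_pow 2 t).const_mul (-(1/2 : ℝ))).exp)
      convert h using 1
      · rfl
      · rfl
      push_cast
      simp only [id_eq]
      ring
    · exact int_exp.sub int_sq_exp
    · exact int_mul_exp
  have h1 := integral_sub int_exp int_sq_exp
  rw [h0, integral_exp_eq] at h1
  linarith

lemma sqrt_two_pi_pos : 0 < Real.sqrt (2 * Real.pi) :=
  Real.sqrt_pos.2 (by positivity)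

lemma gauss_moment0 : ∫ t, (1 : ℝ) ∂(gaussianReal 0 1) = 1 := by simp

lemma gauss_int1 : Integrable (fun t : ℝ => t) (gaussianReal 0 1) := by
  apply gauss_integrable
  have : Integrable (fun t : ℝ => (Real.sqrt (2 * Real.pi))⁻¹ •
      (t * Real.exp (-(1/2 : ℝ) * t ^ 2))) := int_mul_exp.const_mul _
  refine this.congr (Eventually.of_forall fun t => ?_)
  simp only []
  rw [pdf1_eq]
  simp [smul_eq_mul]
  ring

lemma gauss_moment1 : ∫ t, t ∂(gaussianReal 0 1) = 0 := by
  rw [gauss_integral]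
  have : ∀ t : ℝ, pdf1 t * t = (Real.sqrt (2 * Real.pi))⁻¹ •
      (t * Real.exp (-(1/2 : ℝ) * t ^ 2)) := by
    intro t; rw [pdf1_eq]; simp [smul_eq_mul]; ring
  simp_rw [this]
  rw [integral_smul, integral_mul_exp_eq, smul_zero]

lemma gauss_int2 : Integrable (fun t : ℝ => t ^ 2) (gaussianReal 0 1) := by
  apply gauss_integrable
  have : Integrable (fun t : ℝ => (Real.sqrt (2 * Real.pi))⁻¹ •
      (t ^ 2 * Real.exp (-(1/2 : ℝ) * t ^ 2))) := int_sq_exp.const_mul _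
  refine this.congr (Eventually.of_forall fun t => ?_)
  simp only []
  rw [pdf1_eq]
  simp [smul_eq_mul]
  ring

lemma gauss_moment2 : ∫ t, t ^ 2 ∂(gaussianReal 0 1) = 1 := by
  rw [gauss_integral]
  have : ∀ t : ℝ, pdf1 t * t ^ 2 = (Real.sqrt (2 * Real.pi))⁻¹ •
      (t ^ 2 * Real.exp (-(1/2 : ℝ) * t ^ 2)) := by
    intro t; rw [pdf1_eq]; simp [smul_eq_mul]; ring
  simp_rw [this]
  rw [integral_smul, integral_sq_exp_eq, smul_eq_mul,
    inv_mul_cancel₀ sqrt_two_pi_pos.ne']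

end CovAux


namespace CovAux2

noncomputable def μn (n : ℕ) : Measure (Fin n → ℝ) :=
  Measure.pi fun _ : Fin n => gaussianReal 0 1

instance (n : ℕ) : IsProbabilityMeasure (μn n) := by
  unfold μn; infer_instance

lemma pi_integrable (n : ℕ) (f : Fin n → ℝ → ℝ)
    (hf : ∀ i, Integrable (f i) (gaussianReal 0 1)) :
    Integrable (fun y : Fin n → ℝ => ∏ i, f i (y i)) (μn n) := by
  letI : MeasureSpace ℝ := ⟨gaussianReal 0 1⟩
  haveI : SigmaFinite (volume : Measure ℝ) :=
    by have : IsFiniteMeasure (gaussianReal 0 1) := inferInstance; exact inferInstance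
  exact Integrable.fintype_prod (𝕜 := ℝ) hf

lemma pi_integral (n : ℕ) (f : Fin n → ℝ → ℝ) :
    ∫ y, ∏ i, f i (y i) ∂(μn n) = ∏ i, ∫ t, f i t ∂(gaussianReal 0 1) := by
  letI : MeasureSpace ℝ := ⟨gaussianReal 0 1⟩
  haveI : SigmaFinite (volume : Measure ℝ) :=
    by have : IsFiniteMeasure (gaussianReal 0 1) := inferInstance; exact inferInstance
  exact integral_fintype_prod_eq_prod (𝕜 := ℝ) f

end CovAux2

namespace CovAux2

lemma prod_eq_sq (n : ℕ) (i : Fin n) (y : Fin n → ℝ) :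
    ∏ k, (if k = i then (y k) ^ 2 else 1) = (y i) ^ 2 := by
  simp

lemma prod_eq_mul (n : ℕ) (i j : Fin n) (hij : i ≠ j) (y : Fin n → ℝ) :
    ∏ k, (if k = i ∨ k = j then y k else 1) = y i * y j := by
  rw [← Finset.prod_subset (Finset.subset_univ ({i, j} : Finset (Fin n)))
    (fun k _ hk => by
      simp only [Finset.mem_insert, Finset.mem_singleton] at hk
      push_neg at hk
      simp [hk.1, hk.2])]
  rw [Finset.prod_pair hij]
  simp

lemma int_coord_mul (n : ℕ) (i j : Fin n) :
    Integrable (fun y : Fin n → ℝ => y i * y j) (μn n) := by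
  by_cases hij : i = j
  · subst hij
    have h := pi_integrable n (fun k t => if k = i then t ^ 2 else 1)
      (fun k => by
        by_cases hk : k = i
        · simp only [hk, if_pos rfl]; exact CovAux.gauss_int2
        · simp only [if_neg hk]; exact integrable_const 1)
    refine h.congr (Eventually.of_forall fun y => ?_)
    have := prod_eq_sq n i y
    simp only [] at this ⊢
    rw [show (∏ k, (fun t => if k = i then t ^ 2 else 1) (y k)) =
      ∏ k, (if k = i then (y k) ^ 2 else 1) from rfl, this, sq]
  · have h := pi_integrable n (fun k t => if k = i ∨ k = j then t else 1)
      (fun k => by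
        by_cases hk : k = i ∨ k = j
        · simp only [if_pos hk]; exact CovAux.gauss_int1
        · simp only [if_neg hk]; exact integrable_const 1)
    refine h.congr (Eventually.of_forall fun y => ?_)
    exact prod_eq_mul n i j hij y

lemma integral_coord_mul (n : ℕ) (i j : Fin n) :
    ∫ y, y i * y j ∂(μn n) = if i = j then 1 else 0 := by
  by_cases hij : i = j
  · subst hij
    rw [if_pos rfl]
    have : ∀ y : Fin n → ℝ, y i * y i = ∏ k, (if k = i then (y k) ^ 2 else 1) := by
      intro y; rw [prod_eq_sq, sq]
    simp_rw [this]
    rw [pi_integral n (fun k t => if k = i then t ^ 2 else 1)]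
    rw [Finset.prod_eq_one]
    intro k _
    by_cases hk : k = i
    · simp only [hk, if_pos rfl]; exact CovAux.gauss_moment2
    · simp only [if_neg hk]; simp
  · rw [if_neg hij]
    have : ∀ y : Fin n → ℝ, y i * y j = ∏ k, (if k = i ∨ k = j then y k else 1) := by
      intro y; rw [prod_eq_mul n i j hij]
    simp_rw [this]
    rw [pi_integral n (fun k t => if k = i ∨ k = j then t else 1)]
    apply Finset.prod_eq_zero (Finset.mem_univ i)
    simp only [true_or, if_pos]
    exact CovAux.gauss_moment1

end CovAux2


theorem covariance_matrix_bound (n : ℕ) (A : Set (EuclideanSpace ℝ (Fin n)))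
    (hA : MeasurableSet A) :
    let B : Matrix (Fin n) (Fin n) ℝ :=
      Matrix.of fun i j =>
        ∫ x in A, (x i * x j - if i = j then 1 else 0) ∂stdGaussian n
    Matrix.PosSemidef ((4 : ℝ) • (1 : Matrix (Fin n) (Fin n) ℝ) - B * B) ∧
    ∀ u : EuclideanSpace ℝ (Fin n), ‖u‖ = 1 →
      |∑ i, ∑ j, u i * B i j * u j| ≤ 2 := by
  intro B
  set e := (MeasurableEquiv.toLp 2 (Fin n → ℝ)).symm with he
  set S : Set (Fin n → ℝ) := e.symm ⁻¹' A with hSdef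
  have hS : MeasurableSet S := e.symm.measurable hA
  have hBdef : ∀ i j, B i j =
      ∫ y in S, (y i * y j - if i = j then 1 else 0) ∂(CovAux2.μn n) := by
    intro i j
    show (∫ x in A, (x i * x j - if i = j then 1 else 0) ∂stdGaussian n) = _
    have hstd : stdGaussian n = Measure.map (⇑e.symm) (CovAux2.μn n) := rfl
    rw [hstd, setIntegral_map_equiv]
    rfl
  have hterm : ∀ i j : Fin n, Integrable
      (fun y : Fin n → ℝ => y i * y j - if i = j then 1 else 0)
      ((CovAux2.μn n).restrict S) :=
    fun i j => ((CovAux2.int_coord_mul n i j).restrict).sub (integrable_const _)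
  have expand : ∀ (u : Fin n → ℝ) (y : Fin n → ℝ),
      (∑ i, u i * y i) ^ 2 = ∑ i, ∑ j, u i * u j * (y i * y j) := by
    intro u y
    rw [sq, Finset.sum_mul_sum]
    exact Finset.sum_congr rfl fun i _ => Finset.sum_congr rfl fun j _ => by ring
  have hsum_int : ∀ u : Fin n → ℝ,
      Integrable (fun y : Fin n → ℝ => (∑ i, u i * y i) ^ 2) (CovAux2.μn n) := by
    intro u
    have h : Integrable (fun y : Fin n → ℝ =>
        ∑ i, ∑ j, u i * u j * (y i * y j)) (CovAux2.μn n) :=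
      integrable_finset_sum _ fun i _ => integrable_finset_sum _ fun j _ =>
        (CovAux2.int_coord_mul n i j).const_mul _
    exact h.congr (Eventually.of_forall fun y => (expand u y).symm)
  have hdelta : ∀ u : Fin n → ℝ,
      ∑ i, ∑ j, u i * u j * (if i = j then (1:ℝ) else 0) = ∑ i, (u i) ^ 2 := by
    intro u
    refine Finset.sum_congr rfl fun i _ => ?_
    rw [Finset.sum_eq_single i]
    · simp [sq]
    · intro j _ hj
      simp [Ne.symm hj]
    · simp
  have hIfull : ∀ u : Fin n → ℝ,
      ∫ y, (∑ i, u i * y i) ^ 2 ∂(CovAux2.μn n) = ∑ i, (u i) ^ 2 := by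
    intro u
    simp_rw [expand u]
    rw [integral_finset_sum _ fun i _ => integrable_finset_sum _ fun j _ =>
      (CovAux2.int_coord_mul n i j).const_mul _]
    have h : ∀ i, ∫ y, ∑ j, u i * u j * (y i * y j) ∂(CovAux2.μn n)
        = ∑ j, u i * u j * (if i = j then (1:ℝ) else 0) := by
      intro i
      rw [integral_finset_sum _ fun j _ => (CovAux2.int_coord_mul n i j).const_mul _]
      refine Finset.sum_congr rfl fun j _ => ?_
      rw [integral_const_mul, CovAux2.integral_coord_mul]
    simp_rw [h]
    exact hdelta u
  have ptwise : ∀ (u y : Fin n → ℝ),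
      ∑ i, ∑ j, u i * u j * (y i * y j - if i = j then 1 else 0)
        = (∑ i, u i * y i) ^ 2 - ∑ i, (u i) ^ 2 := by
    intro u y
    have h : ∀ i j : Fin n, u i * u j * (y i * y j - if i = j then (1:ℝ) else 0)
        = u i * u j * (y i * y j) - u i * u j * (if i = j then 1 else 0) :=
      fun i j => by ring
    simp_rw [h, Finset.sum_sub_distrib]
    rw [← expand u y, hdelta u]
  have hQ : ∀ u : Fin n → ℝ, (∑ i, ∑ j, u i * B i j * u j) =
      ∫ y in S, ((∑ i, u i * y i) ^ 2 - ∑ i, (u i) ^ 2) ∂(CovAux2.μn n) := by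
    intro u
    have step1 : (∑ i, ∑ j, u i * B i j * u j) =
        ∑ i, ∑ j, ∫ y in S,
          u i * u j * (y i * y j - if i = j then 1 else 0) ∂(CovAux2.μn n) := by
      refine Finset.sum_congr rfl fun i _ => Finset.sum_congr rfl fun j _ => ?_
      rw [hBdef i j, integral_const_mul]
      ring
    have step2 : ∀ i, ∑ j, (∫ y in S,
          u i * u j * (y i * y j - if i = j then 1 else 0) ∂(CovAux2.μn n))
        = ∫ y in S, (∑ j, u i * u j * (y i * y j - if i = j then 1 else 0))
            ∂(CovAux2.μn n) :=
      fun i => (integral_finset_sum _ fun j _ => (hterm i j).const_mul _).symm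
    have step3 : ∑ i, (∫ y in S, (∑ j, u i * u j *
          (y i * y j - if i = j then 1 else 0)) ∂(CovAux2.μn n))
        = ∫ y in S, (∑ i, ∑ j, u i * u j *
            (y i * y j - if i = j then 1 else 0)) ∂(CovAux2.μn n) :=
      (integral_finset_sum _ fun i _ =>
        integrable_finset_sum _ fun j _ => (hterm i j).const_mul _).symm
    rw [step1]
    simp_rw [step2]
    rw [step3]
    exact setIntegral_congr_fun hS fun y _ => ptwise u y
  -- the key scalar bound
  have hbound : ∀ u : Fin n → ℝ,
      |∑ i, ∑ j, u i * B i j * u j| ≤ ∑ i, (u i) ^ 2 := by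
    intro u
    rw [hQ u]
    set c : ℝ := ∑ i, (u i) ^ 2 with hc
    have hc0 : 0 ≤ c := Finset.sum_nonneg fun i _ => sq_nonneg _
    have hsplit : ∫ y in S, ((∑ i, u i * y i) ^ 2 - c) ∂(CovAux2.μn n)
        = (∫ y in S, (∑ i, u i * y i) ^ 2 ∂(CovAux2.μn n))
          - ((CovAux2.μn n) S).toReal * c := by
      rw [integral_sub ((hsum_int u).restrict) (integrable_const _),
        setIntegral_const, smul_eq_mul]
      rfl
    have h1 : 0 ≤ ∫ y in S, (∑ i, u i * y i) ^ 2 ∂(CovAux2.μn n) :=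
      setIntegral_nonneg hS fun y _ => sq_nonneg _
    have h2 : ∫ y in S, (∑ i, u i * y i) ^ 2 ∂(CovAux2.μn n) ≤ c := by
      rw [hc, ← hIfull u]
      exact setIntegral_le_integral (hsum_int u)
        (Eventually.of_forall fun y => sq_nonneg _)
    have h3 : ((CovAux2.μn n) S).toReal ≤ 1 := by
      have hle : (CovAux2.μn n) S ≤ 1 := prob_le_one
      have := ENNReal.toReal_mono (by simp) hle
      simpa using this
    have h4 : 0 ≤ ((CovAux2.μn n) S).toReal := ENNReal.toReal_nonneg
    rw [hsplit, abs_le]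
    constructor
    · nlinarith
    · nlinarith
  -- symmetry of B
  have hBsymm : ∀ i j, B i j = B j i := by
    intro i j
    rw [hBdef i j, hBdef j i]
    refine integral_congr_ae (Eventually.of_forall fun y => ?_)
    show y i * y j - (if i = j then (1:ℝ) else 0)
        = y j * y i - (if j = i then (1:ℝ) else 0)
    have h2 : (if i = j then (1:ℝ) else 0) = (if j = i then 1 else 0) := by
      by_cases h : i = j
      · simp [h]
      · simp [h, Ne.symm h]
    rw [mul_comm (y i) (y j), h2]
  have hBT : B.transpose = B := Matrix.ext fun i j => hBsymm j i
  have hdot : ∀ u v : Fin n → ℝ,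
      dotProduct u (B.mulVec v) = ∑ i, ∑ j, u i * B i j * v j := by
    intro u v
    simp [dotProduct, Matrix.mulVec, Finset.mul_sum, mul_assoc]
  have hb : ∀ u : Fin n → ℝ,
      |dotProduct u (B.mulVec u)| ≤ ∑ i, (u i) ^ 2 := by
    intro u; rw [hdot]; exact hbound u
  have hsymdot : ∀ u v : Fin n → ℝ,
      dotProduct u (B.mulVec v) = dotProduct v (B.mulVec u) := by
    intro u v
    rw [hdot, hdot, Finset.sum_comm]
    refine Finset.sum_congr rfl fun j _ => Finset.sum_congr rfl fun i _ => ?_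
    rw [hBsymm i j]; ring
  -- key vector inequality : ‖Bu‖² ≤ ‖u‖²
  have key : ∀ x : Fin n → ℝ,
      dotProduct (B.mulVec x) (B.mulVec x) ≤ dotProduct x x := by
    intro x
    set w : Fin n → ℝ := B.mulVec x with hw
    have e2 : dotProduct x (B.mulVec w) = dotProduct w w := by
      rw [Matrix.dotProduct_mulVec, ← Matrix.mulVec_transpose, hBT]
    have hpolar : dotProduct (x + w) (B.mulVec (x + w))
        - dotProduct (x - w) (B.mulVec (x - w))
        = 4 * dotProduct x (B.mulVec w) := by
      rw [Matrix.mulVec_add, Matrix.mulVec_sub]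
      simp only [dotProduct_add, dotProduct_sub, add_dotProduct,
        sub_dotProduct]
      rw [hsymdot w x]
      ring
    have hplus : ∑ i, ((x + w) i) ^ 2 + ∑ i, ((x - w) i) ^ 2
        = 2 * dotProduct x x + 2 * dotProduct w w := by
      have hxx : dotProduct x x = ∑ i, (x i) ^ 2 := by
        simp [dotProduct, sq]
      have hww : dotProduct w w = ∑ i, (w i) ^ 2 := by
        simp [dotProduct, sq]
      rw [hxx, hww, ← Finset.sum_add_distrib, Finset.mul_sum, Finset.mul_sum,
        ← Finset.sum_add_distrib]
      refine Finset.sum_congr rfl fun i _ => ?_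
      simp only [Pi.add_apply, Pi.sub_apply]
      ring
    have b1 := hb (x + w)
    have b2 := hb (x - w)
    have l1 : dotProduct (x + w) (B.mulVec (x + w)) ≤ ∑ i, ((x + w) i) ^ 2 :=
      le_trans (le_abs_self _) b1
    have l2 : -(dotProduct (x - w) (B.mulVec (x - w))) ≤ ∑ i, ((x - w) i) ^ 2 :=
      le_trans (neg_le_abs _) b2
    rw [e2] at hpolar
    linarith
  constructor
  · -- PosSemidef
    rw [Matrix.posSemidef_iff_dotProduct_mulVec]
    constructor
    · -- Hermitian
      have hBH : B.conjTranspose = B := by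
        rw [Matrix.conjTranspose]
        ext i j
        simpa using congrFun (congrFun hBT i) j
      show ((4:ℝ) • (1 : Matrix (Fin n) (Fin n) ℝ) - B * B).conjTranspose = _
      rw [Matrix.conjTranspose_sub, Matrix.conjTranspose_smul, Matrix.conjTranspose_one,
        Matrix.conjTranspose_mul, hBH]
      simp
    · intro x
      have hstar : star x = x := star_trivial x
      rw [hstar]
      have hcalc : dotProduct x
            ((((4:ℝ) • (1 : Matrix (Fin n) (Fin n) ℝ) - B * B)).mulVec x)
          = 4 * dotProduct x x
            - dotProduct (B.mulVec x) (B.mulVec x) := by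
        rw [Matrix.sub_mulVec, dotProduct_sub, Matrix.smul_mulVec,
          Matrix.one_mulVec, dotProduct_smul, ← Matrix.mulVec_mulVec,
          Matrix.dotProduct_mulVec (v := x) (A := B), ← Matrix.mulVec_transpose, hBT]
        simp [smul_eq_mul]
      rw [hcalc]
      have h0 : 0 ≤ dotProduct x x := by
        have hxx : dotProduct x x = ∑ i, (x i) ^ 2 := by simp [dotProduct, sq]
        rw [hxx]; exact Finset.sum_nonneg fun i _ => sq_nonneg _
      have := key x
      linarith
  · intro u hu
    have hc : ∑ i, (u i : ℝ) ^ 2 = 1 := by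
      have hn := EuclideanSpace.norm_eq u
      rw [hu] at hn
      have h1 : Real.sqrt (∑ i, ‖u i‖ ^ 2) = 1 := hn.symm
      have h2 : ∑ i, ‖u i‖ ^ 2 = 1 := by
        have := Real.sqrt_eq_one.mp h1
        exact this
      simpa [Real.norm_eq_abs, sq_abs] using h2
    calc |∑ i, ∑ j, u i * B i j * u j| ≤ ∑ i, (u i) ^ 2 := hbound (fun i => u i)
      _ = 1 := hc
      _ ≤ 2 := by norm_num
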